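/- arXiv:2208.01738 — 2 statements merged into one kernel-verified Lean document; each statement's English description precedes it below -/
import Mathlib

section
/- Fix N ≥ 1, weights w : Fin N → ℝ with w_i ≥ 0, and P : Fin N → Fin N → ℝ with entries p_{ij} ∈ [0,1]. Let D = {π ∈ ℝ^N : π_j ≥ 0 for all j, Σ_j π_j = 1, and Σ_j π_j p_{ji} > 0 for all i}, and let f(π) = Σ_i w_i / (Σ_j π_j p_{ji}). Suppose π* ∈ D minimizes f over D. For each source j write Ā_j = 1/(Σ_k π*_k p_{kj}). Then for any two indices i and i' with π*_i > 0 and π*_{i'} > 0, one has Σ_j p_{ij} w_j Ā_j² = Σ_j p_{i'j} w_j Ā_j². -/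
/-- First-order optimality structure of the optimal stationary randomized policy:
at an optimum, `∑_j p_{ij} w_j Ā_j²` is constant over sources scheduled with
positive probability. -/
theorem stmt4
    (N : ℕ) (hN : 1 ≤ N)
    (w : Fin N → ℝ) (hw : ∀ i, 0 ≤ w i)
    (P : Fin N → Fin N → ℝ) (hP : ∀ i j, P i j ∈ Set.Icc (0 : ℝ) 1)
    (D : Set (Fin N → ℝ))
    (hD : D = {π : Fin N → ℝ |
      (∀ j, 0 ≤ π j) ∧ (∑ j, π j = 1) ∧ ∀ i, 0 < ∑ j, π j * P j i})
    (f : (Fin N → ℝ) → ℝ)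
    (hf : f = fun π => ∑ i, w i / ∑ j, π j * P j i)
    (πs : Fin N → ℝ) (hmem : πs ∈ D)
    (hmin : ∀ π ∈ D, f πs ≤ f π)
    (A : Fin N → ℝ) (hA : ∀ j, A j = 1 / ∑ k, πs k * P k j) :
    ∀ i i', 0 < πs i → 0 < πs i' →
      ∑ j, P i j * w j * (A j) ^ 2 = ∑ j, P i' j * w j * (A j) ^ 2 := by
  intro i i' hi hi'
  by_cases hii : i = i'
  · subst hii; rfl
  subst hD hf
  obtain ⟨hnn, hsum, hposS⟩ := hmem
  set S : Fin N → ℝ := fun j => ∑ k, πs k * P k j with hSdef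
  have hS : ∀ j, 0 < S j := hposS
  set c : Fin N → ℝ := fun j => P i' j - P i j with hcdef
  set d : Fin N → ℝ := fun k =>
    (if k = i' then (1:ℝ) else 0) - (if k = i then 1 else 0) with hddef
  have hdsum : ∑ k, d k = 0 := by
    simp [hddef, Finset.sum_sub_distrib]
  have hdP : ∀ j, ∑ k, d k * P k j = c j := by
    intro j
    simp [hddef, hcdef, sub_mul, Finset.sum_sub_distrib, Finset.sum_ite_eq']
  set g : ℝ → ℝ := fun t => ∑ j, w j / (S j + c j * t) with hgdef
  -- value of f on perturbed policies
  have hval : ∀ t : ℝ, (∑ j, w j / ∑ k, (πs k + t * d k) * P k j) = g t := by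
    intro t
    refine Finset.sum_congr rfl fun j _ => ?_
    congr 1
    rw [show (∑ k, (πs k + t * d k) * P k j)
        = (∑ k, πs k * P k j) + t * ∑ k, d k * P k j by
      rw [Finset.mul_sum, ← Finset.sum_add_distrib]
      refine Finset.sum_congr rfl fun k _ => by ring]
    rw [hdP j]; ring
  -- local minimum of g at 0
  have hloc : IsLocalMin g 0 := by
    have e1 : ∀ᶠ t in nhds (0:ℝ), 0 < πs i - t := by
      have ht : Filter.Tendsto (fun t : ℝ => πs i - t) (nhds 0) (nhds (πs i)) := by
        exact (continuous_const.sub continuous_id).tendsto' _ _ (by simp)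
      exact ht.eventually (eventually_gt_nhds hi)
    have e2 : ∀ᶠ t in nhds (0:ℝ), 0 < πs i' + t := by
      have ht : Filter.Tendsto (fun t : ℝ => πs i' + t) (nhds 0) (nhds (πs i')) := by
        exact (continuous_const.add continuous_id).tendsto' _ _ (by simp)
      exact ht.eventually (eventually_gt_nhds hi')
    have e3 : ∀ᶠ t in nhds (0:ℝ), ∀ j, 0 < S j + c j * t := by
      rw [Filter.eventually_all]
      intro j
      have ht : Filter.Tendsto (fun t : ℝ => S j + c j * t) (nhds 0) (nhds (S j)) := by
        exact (continuous_const.add (continuous_const.mul continuous_id)).tendsto' _ _ (by simp [hSdef])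
      exact ht.eventually (eventually_gt_nhds (hS j))
    filter_upwards [e1, e2, e3] with t h1 h2 h3
    have hmemt : (fun k => πs k + t * d k) ∈
        {π : Fin N → ℝ | (∀ j, 0 ≤ π j) ∧ (∑ j, π j = 1) ∧ ∀ i, 0 < ∑ j, π j * P j i} := by
      refine ⟨fun j => ?_, ?_, fun j => ?_⟩
      · show 0 ≤ πs j + t * d j
        by_cases hji : j = i
        · have hd1 : d j = -1 := by simp [hddef, hji, hii]
          rw [hd1, hji]; linarith
        · by_cases hji' : j = i'
          · have hd1 : d j = 1 := by
              have hii' : ¬ i' = i := fun h => hii h.symm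
              simp [hddef, hji, hji', hii']
            rw [hd1, hji']; linarith
          · have hd1 : d j = 0 := by simp [hddef, hji, hji']
            rw [hd1]; simpa using hnn j
      · rw [Finset.sum_add_distrib, hsum, ← Finset.mul_sum, hdsum]; ring
      · rw [show (∑ k, (πs k + t * d k) * P k j)
            = (∑ k, πs k * P k j) + t * ∑ k, d k * P k j by
          rw [Finset.mul_sum, ← Finset.sum_add_distrib]
          refine Finset.sum_congr rfl fun k _ => by ring]
        rw [hdP j]
        have := h3 j
        linarith [this]
    have hle := hmin _ hmemt
    dsimp only at hle
    rw [hval t] at hle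
    have h0 : (∑ j, w j / ∑ k, πs k * P k j) = g 0 := by
      refine Finset.sum_congr rfl fun j _ => by simp [hSdef]
    calc g 0 = ∑ j, w j / ∑ k, πs k * P k j := h0.symm
      _ ≤ g t := hle
  -- derivative of g at 0
  have hderiv : HasDerivAt g (∑ j, -(w j * c j) / (S j) ^ 2) 0 := by
    rw [hgdef]
    refine HasDerivAt.fun_sum fun j _ => ?_
    have hu : HasDerivAt (fun t : ℝ => S j + c j * t) (c j) 0 := by
      simpa using ((hasDerivAt_id (0:ℝ)).const_mul (c j)).const_add (S j)
    have hne : S j + c j * 0 ≠ 0 := by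
      simpa using (hS j).ne'
    have := (hasDerivAt_const (0:ℝ) (w j)).fun_div hu hne
    refine this.congr_deriv ?_
    rw [mul_zero, add_zero]
    field_simp
    ring
  have hzero : (∑ j, -(w j * c j) / (S j) ^ 2) = 0 := by
    have := hloc.deriv_eq_zero
    rwa [hderiv.deriv] at this
  -- conclude
  have hAS : ∀ j, A j = 1 / S j := hA
  have key : ∀ j, P i' j * w j * (A j) ^ 2 - P i j * w j * (A j) ^ 2
      = -(-(w j * c j) / (S j) ^ 2) := by
    intro j
    rw [hAS j, hcdef]
    have := (hS j).ne'
    field_simp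
  have : (∑ j, P i' j * w j * (A j) ^ 2) - (∑ j, P i j * w j * (A j) ^ 2) = 0 := by
    rw [← Finset.sum_sub_distrib]
    calc (∑ j, (P i' j * w j * (A j) ^ 2 - P i j * w j * (A j) ^ 2))
        = ∑ j, -(-(w j * c j) / (S j) ^ 2) := Finset.sum_congr rfl fun j _ => key j
      _ = -∑ j, -(w j * c j) / (S j) ^ 2 := by rw [Finset.sum_neg_distrib]
      _ = 0 := by rw [hzero]; ring
  linarith [this]
end

section
/- Let N ≥ 1 and let u : Fin N → ℕ → {0,1} be a schedule with Σ_j u_j(t) ≤ 1 for every t. Let X, X' : Fin N → Fin N → ℕ → {0,1} satisfy X_{ji}(t) ≥ X'_{ji}(t) for all j, i, t. Define two Age of Information trajectories by A_i(t+1) = A_i(t) + 1 − A_i(t)·Σ_j u_j(t)·X_{ji}(t) and A'_i(t+1) = A'_i(t) + 1 − A'_i(t)·Σ_j u_j(t)·X'_{ji}(t), with common nonnegative initial conditions A_i(1) = A'_i(1) ≥ 0. Then A_i(t) ≤ A'_i(t) for all i and all t ≥ 1. -/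
/-- Monotonicity of AoI in the correlation variables: pathwise domination of the
delivery indicators gives pathwise domination of the Age of Information. -/
theorem stmt15
    (N : ℕ) (hN : 1 ≤ N)
    (u : Fin N → ℕ → ℝ)
    (hu01 : ∀ j t, u j t = 0 ∨ u j t = 1)
    (husum : ∀ t, ∑ j, u j t ≤ 1)
    (X X' : Fin N → Fin N → ℕ → ℝ)
    (hX01 : ∀ j i t, X j i t = 0 ∨ X j i t = 1)
    (hX'01 : ∀ j i t, X' j i t = 0 ∨ X' j i t = 1)
    (hdom : ∀ j i t, X' j i t ≤ X j i t)
    (A A' : Fin N → ℕ → ℝ)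
    (hinit : ∀ i, A i 1 = A' i 1)
    (hinit0 : ∀ i, 0 ≤ A i 1)
    (hArec : ∀ i t, 1 ≤ t →
      A i (t + 1) = A i t + 1 - A i t * ∑ j, u j t * X j i t)
    (hA'rec : ∀ i t, 1 ≤ t →
      A' i (t + 1) = A' i t + 1 - A' i t * ∑ j, u j t * X' j i t) :
    ∀ i, ∀ t, 1 ≤ t → A i t ≤ A' i t := by
  have hu0 : ∀ j t, 0 ≤ u j t := by
    intro j t; rcases hu01 j t with h | h <;> simp [h]
  have key : ∀ i t, 1 ≤ t → 0 ≤ A i t ∧ A i t ≤ A' i t := by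
    intro i t
    induction t with
    | zero => intro h; omega
    | succ n ih =>
      intro _
      rcases Nat.eq_or_lt_of_le (Nat.zero_le n) with h0 | hpos
      · constructor
        · exact h0 ▸ hinit0 i
        · exact le_of_eq (h0 ▸ hinit i)
      · have hn : 1 ≤ n := hpos
        obtain ⟨hA0, hle⟩ := ih hn
        -- sums
        set S := ∑ j, u j n * X j i n with hS
        set S' := ∑ j, u j n * X' j i n with hS'
        have hSnn : 0 ≤ S := Finset.sum_nonneg fun j _ => by
          rcases hX01 j i n with h | h <;> simp [h, hu0 j n]
        have hS'nn : 0 ≤ S' := Finset.sum_nonneg fun j _ => by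
          rcases hX'01 j i n with h | h <;> simp [h, hu0 j n]
        have hS1 : S ≤ 1 := by
          refine le_trans (Finset.sum_le_sum fun j _ => ?_) (husum n)
          rcases hX01 j i n with h | h <;> simp [h, hu0 j n]
        have hS'S : S' ≤ S := Finset.sum_le_sum fun j _ =>
          mul_le_mul_of_nonneg_left (hdom j i n) (hu0 j n)
        have hA'0 : 0 ≤ A' i n := le_trans hA0 hle
        have e1 : A i (n+1) = A i n * (1 - S) + 1 := by
          rw [hArec i n hn]; ring
        have e2 : A' i (n+1) = A' i n * (1 - S') + 1 := by
          rw [hA'rec i n hn]; ring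
        constructor
        · rw [e1]
          have : 0 ≤ A i n * (1 - S) :=
            mul_nonneg hA0 (by linarith)
          linarith
        · rw [e1, e2]
          have h1 : A i n * (1 - S) ≤ A' i n * (1 - S) :=
            mul_le_mul_of_nonneg_right hle (by linarith)
          have h2 : A' i n * (1 - S) ≤ A' i n * (1 - S') :=
            mul_le_mul_of_nonneg_left (by linarith) hA'0
          linarith
  exact fun i t ht => (key i t ht).2
end
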